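/- For 0 ≤ k ≤ ⌊n/2⌋, (1+q^{n+2}) T_{n+2}^k(x,s,q) = U_{n+2}^k(x,s,q) + q^{2n+3} s U_n^{k-1}(x,s,q). -/

import Mathlib

/-- q-integer [n]_q = (1-q^n)/(1-q). -/
noncomputable def qint (q : ℂ) (n : ℕ) : ℂ := (1 - q ^ n) / (1 - q)

/-- q-factorial [n]_q!. -/
noncomputable def qfact (q : ℂ) (n : ℕ) : ℂ := ∏ i ∈ Finset.range n, qint q (i + 1)

/-- Gaussian (q-binomial) coefficient, 0 for k > n. -/
noncomputable def qbinom (q : ℂ) (n k : ℕ) : ℂ :=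
  if k ≤ n then qfact q n / (qfact q (n - k) * qfact q k) else 0

/-- q-shifted factorial (x;q)_n. -/
noncomputable def qpoch (x q : ℂ) (n : ℕ) : ℂ := ∏ i ∈ Finset.range n, (1 - q ^ i * x)

/-- Partial sum defining incomplete q-Chebyshev polynomials of the second kind:
`Usum x s q n (k+1)` is U_n^k(x,s,q), and `Usum x s q n 0 = 0` is the empty sum (k = -1). -/
noncomputable def Usum (x s q : ℂ) (n m : ℕ) : ℂ :=
  ∑ j ∈ Finset.range m,
    q ^ (j ^ 2) * qbinom q (n - j) j * (qpoch (-q) q (n - j) / qpoch (-q) q j) *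
      s ^ j * x ^ (n - 2 * j)

/-- Partial sum defining incomplete q-Chebyshev polynomials of the first kind:
`Tsum x s q n (k+1)` is T_n^k(x,s,q). -/
noncomputable def Tsum (x s q : ℂ) (n m : ℕ) : ℂ :=
  ∑ j ∈ Finset.range m,
    q ^ (j ^ 2) * (qint q n / qint q (n - j)) * qbinom q (n - j) j *
      (qpoch (-q) q (n - j - 1) / qpoch (-q) q j) * s ^ j * x ^ (n - 2 * j)


section aux
variable {q : ℂ}

lemma one_sub_pow_ne (hq1 : ‖q‖ < 1) (m : ℕ) (hm : m ≠ 0) : (1 : ℂ) - q ^ m ≠ 0 := by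
  have : ‖q ^ m‖ < 1 := by
    rw [norm_pow]; exact pow_lt_one₀ (norm_nonneg q) hq1 hm
  intro h
  have h2 : q ^ m = 1 := by linear_combination -h
  rw [h2] at this; simp at this

lemma one_add_pow_ne (hq1 : ‖q‖ < 1) (m : ℕ) (hm : m ≠ 0) : (1 : ℂ) + q ^ m ≠ 0 := by
  have : ‖q ^ m‖ < 1 := by
    rw [norm_pow]; exact pow_lt_one₀ (norm_nonneg q) hq1 hm
  intro h
  have h2 : q ^ m = -1 := by linear_combination h
  rw [h2] at this; simp at this

lemma one_sub_ne (hq1 : ‖q‖ < 1) : (1 : ℂ) - q ≠ 0 := by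
  have := one_sub_pow_ne hq1 1 one_ne_zero
  simpa using this

lemma qint_ne (hq1 : ‖q‖ < 1) (m : ℕ) (hm : m ≠ 0) : qint q m ≠ 0 :=
  div_ne_zero (one_sub_pow_ne hq1 m hm) (one_sub_ne hq1)

lemma qfact_ne (hq1 : ‖q‖ < 1) (m : ℕ) : qfact q m ≠ 0 :=
  Finset.prod_ne_zero_iff.2 fun i _ => qint_ne hq1 (i + 1) (Nat.succ_ne_zero i)

lemma qpoch_negq (m : ℕ) : qpoch (-q) q m = ∏ i ∈ Finset.range m, (1 + q ^ (i + 1)) := by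
  refine Finset.prod_congr rfl fun i _ => ?_
  rw [pow_succ]; ring

lemma qpoch_ne (hq1 : ‖q‖ < 1) (m : ℕ) : qpoch (-q) q m ≠ 0 := by
  rw [qpoch_negq]
  exact Finset.prod_ne_zero_iff.2 fun i _ => one_add_pow_ne hq1 (i + 1) (Nat.succ_ne_zero i)

lemma qpoch_succ (m : ℕ) : qpoch (-q) q (m + 1) = qpoch (-q) q m * (1 + q ^ (m + 1)) := by
  rw [qpoch_negq, qpoch_negq, Finset.prod_range_succ]

lemma qfact_succ (m : ℕ) : qfact q (m + 1) = qfact q m * qint q (m + 1) :=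
  Finset.prod_range_succ _ m

set_option maxHeartbeats 2000000 in
lemma term_id (hq1 : ‖q‖ < 1) (x s : ℂ) (j d : ℕ) :
    (1 + q ^ (2 * j + d + 2)) *
      (q ^ ((j + 1) ^ 2) * (qint q (2 * j + d + 2) / qint q (j + d + 1)) *
        qbinom q (j + d + 1) (j + 1) *
        (qpoch (-q) q (j + d) / qpoch (-q) q (j + 1)) * s ^ (j + 1) * x ^ d) =
    q ^ ((j + 1) ^ 2) * qbinom q (j + d + 1) (j + 1) *
        (qpoch (-q) q (j + d + 1) / qpoch (-q) q (j + 1)) * s ^ (j + 1) * x ^ d +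
      q ^ (2 * (2 * j + d) + 3) * s *
        (q ^ (j ^ 2) * qbinom q (j + d) j * (qpoch (-q) q (j + d) / qpoch (-q) q j) *
          s ^ j * x ^ d) := by
  have e2 : (j + 1) ^ 2 = j ^ 2 + (2 * j + 1) := by ring
  rw [qbinom, qbinom, if_pos (by omega), if_pos (by omega),
    show j + d + 1 - (j + 1) = d from by omega, show j + d - j = d from by omega,
    show j + d + 1 = (j + d) + 1 from rfl, qfact_succ, qfact_succ,
    qpoch_succ, qpoch_succ, e2, pow_add]
  have hF := qfact_ne hq1 (j + d)
  have hFd := qfact_ne hq1 d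
  have hFj := qfact_ne hq1 j
  have hP := qpoch_ne hq1 (j + d)
  have hPj := qpoch_ne hq1 j
  have h1 := one_add_pow_ne hq1 (j + 1) (by omega)
  have h1q := one_sub_ne hq1
  have hm := one_sub_pow_ne hq1 (j + d + 1) (by omega)
  have hj1 := one_sub_pow_ne hq1 (j + 1) (by omega)
  unfold qint
  rw [show s ^ (j + 1) = s ^ j * s from pow_succ s j]
  generalize qfact q (j + d) = F
  generalize qfact q d = Fd at hFd ⊢
  generalize qfact q j = Fj at hFj ⊢
  generalize qpoch (-q) q (j + d) = P
  generalize qpoch (-q) q j = Pj at hPj ⊢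
  generalize s ^ j = S
  generalize x ^ d = X
  field_simp
  ring

end aux

theorem Tinc_Uinc_combination (q : ℂ) (hq0 : 0 < ‖q‖) (hq1 : ‖q‖ < 1)
    (x s : ℂ) (n k : ℕ) (hk : 2 * k ≤ n) :
    (1 + q ^ (n + 2)) * Tsum x s q (n + 2) (k + 1) =
      Usum x s q (n + 2) (k + 1) + q ^ (2 * n + 3) * s * Usum x s q n k := by
  rw [Tsum, Usum, Usum, Finset.mul_sum, Finset.mul_sum, Finset.sum_range_succ', Finset.sum_range_succ' (fun j => q ^ (j ^ 2) * qbinom q (n + 2 - j) j * (qpoch (-q) q (n + 2 - j) / qpoch (-q) q j) * s ^ j * x ^ (n + 2 - 2 * j))]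
  have h0 : (1 + q ^ (n + 2)) *
      (q ^ (0 ^ 2) * (qint q (n + 2) / qint q (n + 2 - 0)) * qbinom q (n + 2 - 0) 0 *
        (qpoch (-q) q (n + 2 - 0 - 1) / qpoch (-q) q 0) * s ^ 0 * x ^ (n + 2 - 2 * 0)) =
      q ^ (0 ^ 2) * qbinom q (n + 2 - 0) 0 * (qpoch (-q) q (n + 2 - 0) / qpoch (-q) q 0) *
        s ^ 0 * x ^ (n + 2 - 2 * 0) := by
    simp only [Nat.sub_zero, pow_zero, mul_one, one_mul]
    rw [div_self (qint_ne hq1 (n + 2) (by omega)),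
      show n + 2 - 1 = (n + 1) from rfl,
      show qpoch (-q) q (n + 2) = qpoch (-q) q (n + 1) * (1 + q ^ (n + 2)) from qpoch_succ (n + 1)]
    ring
  have hstep : ∀ j ∈ Finset.range k,
      (1 + q ^ (n + 2)) *
        (q ^ ((j + 1) ^ 2) * (qint q (n + 2) / qint q (n + 2 - (j + 1))) *
          qbinom q (n + 2 - (j + 1)) (j + 1) *
          (qpoch (-q) q (n + 2 - (j + 1) - 1) / qpoch (-q) q (j + 1)) * s ^ (j + 1) *
          x ^ (n + 2 - 2 * (j + 1))) =
      q ^ ((j + 1) ^ 2) * qbinom q (n + 2 - (j + 1)) (j + 1) *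
          (qpoch (-q) q (n + 2 - (j + 1)) / qpoch (-q) q (j + 1)) * s ^ (j + 1) *
          x ^ (n + 2 - 2 * (j + 1)) +
        q ^ (2 * n + 3) * s *
          (q ^ (j ^ 2) * qbinom q (n - j) j * (qpoch (-q) q (n - j) / qpoch (-q) q j) *
            s ^ j * x ^ (n - 2 * j)) := by
    intro j hj
    rw [Finset.mem_range] at hj
    obtain ⟨d, rfl⟩ : ∃ d, n = 2 * j + d := ⟨n - 2 * j, by omega⟩
    rw [show 2 * j + d + 2 - (j + 1) = j + d + 1 from by omega,
      show j + d + 1 - 1 = j + d from rfl,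
      show 2 * j + d + 2 - 2 * (j + 1) = d from by omega,
      show 2 * j + d - j = j + d from by omega,
      show 2 * j + d - 2 * j = d from by omega,
      show 2 * j + d + 2 = 2 * j + d + 2 from rfl,
      show 2 * (2 * j + d) + 3 = 2 * (2 * j + d) + 3 from rfl]
    exact term_id hq1 x s j d
  rw [Finset.sum_congr rfl hstep, h0, Finset.sum_add_distrib, ← Finset.mul_sum]
  ring
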